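/- Let (X,d) be a metric space, G : X → [0,∞) Borel, and x, y ∈ X with G(y) = 0. Then the map T ↦ E_G^T(x,y) is nonincreasing on (0,∞), satisfies E_G^T(x,y) ≥ d_G(x,y) for every T > 0, and lim_{T→∞} E_G^T(x,y) = d_G(x,y). -/

import Mathlib

open MeasureTheory Set Filter
open scoped ENNReal

noncomputable section

/-- `m` is a (nonnegative, integrable) upper speed of the curve `γ` on `[a,b]`:
`dist (γ s) (γ t) ≤ ∫_s^t m` for all `a ≤ s ≤ t ≤ b`. -/
def IsUpperSpeedOn {X : Type*} [MetricSpace X] (γ : ℝ → X) (m : ℝ → ℝ) (a b : ℝ) : Prop :=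
  (∀ r ∈ Set.Icc a b, 0 ≤ m r) ∧
  IntervalIntegrable m MeasureTheory.volume a b ∧
  ∀ s t : ℝ, a ≤ s → s ≤ t → t ≤ b → dist (γ s) (γ t) ≤ ∫ r in s..t, m r

/-- The Finsler cost `d_G(x,y)`: the infimum of `∫_0^1 m(t) G(γ(t)) dt` over continuous
curves `γ : [0,1] → X` joining `x` to `y` with integrable upper speed `m`;
`+∞` if no admissible pair exists. -/
def finslerCost {X : Type*} [MetricSpace X] (G : X → ℝ) (x y : X) : ℝ≥0∞ :=
  sInf { c : ℝ≥0∞ | ∃ γ : ℝ → X, ∃ m : ℝ → ℝ,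
    ContinuousOn γ (Set.Icc 0 1) ∧ γ 0 = x ∧ γ 1 = y ∧
    IsUpperSpeedOn γ m 0 1 ∧
    c = ∫⁻ t in Set.Ioc (0:ℝ) 1, ENNReal.ofReal (m t * G (γ t)) }

/-- The action `E_G^T(x,y)`: the infimum of `∫_0^T ((1/2) m(t)² + (1/2) G(γ(t))²) dt` over
continuous curves `γ : [0,T] → X` joining `x` to `y` with square-integrable upper speed `m`;
`+∞` if no admissible pair exists. -/
def actionCost {X : Type*} [MetricSpace X] (G : X → ℝ) (T : ℝ) (x y : X) : ℝ≥0∞ :=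
  sInf { c : ℝ≥0∞ | ∃ γ : ℝ → X, ∃ m : ℝ → ℝ,
    ContinuousOn γ (Set.Icc 0 T) ∧ γ 0 = x ∧ γ T = y ∧
    IsUpperSpeedOn γ m 0 T ∧
    IntervalIntegrable (fun t => (m t) ^ 2) MeasureTheory.volume 0 T ∧
    c = ∫⁻ t in Set.Ioc (0:ℝ) T,
          ENNReal.ofReal ((1/2) * (m t) ^ 2 + (1/2) * (G (γ t)) ^ 2) }

/-- `G` is a strong upper gradient of `v`: along every continuous curve with integrable
upper speed `m`, `|v(γ t) − v(γ s)| ≤ ∫_s^t G(γ r) m(r) dr` (the right-hand side taken as a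
possibly infinite nonnegative integral). -/
def IsStrongUpperGradient {X : Type*} [MetricSpace X] (G v : X → ℝ) : Prop :=
  ∀ (a b : ℝ) (γ : ℝ → X) (m : ℝ → ℝ),
    ContinuousOn γ (Set.Icc a b) → IsUpperSpeedOn γ m a b →
    ∀ s t : ℝ, a ≤ s → s ≤ t → t ≤ b →
      ENNReal.ofReal |v (γ t) - v (γ s)| ≤
        ∫⁻ r in Set.Ioc s t, ENNReal.ofReal (G (γ r) * m r)

/-- A gradient-flow curve (curve of maximal slope in energy-dissipation form) of `v` with
respect to `G`: `η` is continuous on `[0,∞)`, `G∘η` is square-integrable on compacts and is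
an upper speed of `η` on every compact subinterval of `[0,∞)`, and the energy-dissipation
equality `v(η s) − v(η t) = ∫_s^t G(η r)² dr` holds for `0 ≤ s ≤ t`. -/
def IsGradientFlowCurve {X : Type*} [MetricSpace X] (v G : X → ℝ) (η : ℝ → X) : Prop :=
  ContinuousOn η (Set.Ici 0) ∧
  (∀ b : ℝ, 0 ≤ b → IntervalIntegrable (fun t => (G (η t)) ^ 2) MeasureTheory.volume 0 b) ∧
  (∀ a b : ℝ, 0 ≤ a → a ≤ b → IsUpperSpeedOn η (fun t => G (η t)) a b) ∧
  ∀ s t : ℝ, 0 ≤ s → s ≤ t → v (η s) - v (η t) = ∫ r in s..t, (G (η r)) ^ 2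

lemma ofReal_intervalIntegral_eq_lintegral {f : ℝ → ℝ} {a b : ℝ} (hab : a ≤ b)
    (hf : IntegrableOn f (Set.Ioc a b) volume) (h0 : ∀ r ∈ Set.Ioc a b, 0 ≤ f r) :
    ENNReal.ofReal (∫ r in a..b, f r) = ∫⁻ r in Set.Ioc a b, ENNReal.ofReal (f r) := by
  rw [intervalIntegral.integral_of_le hab,
    MeasureTheory.ofReal_integral_eq_lintegral_ofReal hf
      ((ae_restrict_iff' measurableSet_Ioc).2 (Filter.Eventually.of_forall h0))]

lemma IsUpperSpeedOn.continuousOn {X : Type*} [MetricSpace X] {γ : ℝ → X} {m : ℝ → ℝ} {a b : ℝ}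
    (h : IsUpperSpeedOn γ m a b) : ContinuousOn γ (Set.Icc a b) := by
  rcases le_or_gt b a with hba | hab
  · refine Set.Subsingleton.continuousOn (fun u hu v hv => ?_) γ
    have : u = a := le_antisymm (hu.2.trans hba) hu.1
    have hv' : v = a := le_antisymm (hv.2.trans hba) hv.1
    rw [this, hv']
  · set F : ℝ → ℝ := fun t => ∫ r in a..t, m r with hFdef
    have hFc : ContinuousOn F (Set.Icc a b) := by
      have : IntegrableOn m (Set.Icc a b) volume := by
        rw [integrableOn_Icc_iff_integrableOn_Ioc]
        exact h.2.1.1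
      have := intervalIntegral.continuousOn_primitive_interval (μ := volume) (a := a) (b := b)
        (f := m) (by rwa [Set.uIcc_of_le hab.le])
      rwa [Set.uIcc_of_le hab.le] at this
    intro t ht
    have hFt : ContinuousWithinAt F (Set.Icc a b) t := hFc t ht
    rw [Metric.continuousWithinAt_iff] at hFt ⊢
    intro ε hε
    obtain ⟨d, hd, hdd⟩ := hFt ε hε
    refine ⟨d, hd, fun {s} hs hds => ?_⟩
    have hsub : ∀ u v : ℝ, a ≤ u → u ≤ v → v ≤ b → F v - F u = ∫ r in u..v, m r := by
      intro u v hu huv hv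
      have h1 : IntervalIntegrable m volume a u :=
        h.2.1.mono_set (Set.uIcc_subset_uIcc (Set.left_mem_uIcc)
          (by rw [Set.uIcc_of_le hab.le]; exact ⟨hu, huv.trans hv⟩))
      have h2 : IntervalIntegrable m volume u v :=
        h.2.1.mono_set (Set.uIcc_subset_uIcc
          (by rw [Set.uIcc_of_le hab.le]; exact ⟨hu, huv.trans hv⟩)
          (by rw [Set.uIcc_of_le hab.le]; exact ⟨hu.trans huv, hv⟩))
      have := intervalIntegral.integral_add_adjacent_intervals h1 h2
      simp only [hFdef]
      linarith [this]
    have key : dist (γ s) (γ t) ≤ dist (F s) (F t) := by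
      rcases le_total s t with hst | hst
      · calc dist (γ s) (γ t) ≤ ∫ r in s..t, m r := h.2.2 s t hs.1 hst ht.2
          _ = F t - F s := (hsub s t hs.1 hst ht.2).symm
          _ ≤ |F t - F s| := le_abs_self _
          _ = dist (F s) (F t) := by rw [Real.dist_eq, abs_sub_comm]
      · calc dist (γ s) (γ t) = dist (γ t) (γ s) := dist_comm _ _
          _ ≤ ∫ r in t..s, m r := h.2.2 t s ht.1 hst hs.2
          _ = F s - F t := (hsub t s ht.1 hst hs.2).symm
          _ ≤ |F s - F t| := le_abs_self _
          _ = dist (F s) (F t) := by rw [Real.dist_eq]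
    exact lt_of_le_of_lt key (hdd hs hds)

def sigmaFn (g : ℝ → ℝ) : ℝ → ℝ := fun t => ∫ r in (0:ℝ)..t, g r

open Classical in
def tauFn (g : ℝ → ℝ) : ℝ → ℝ := fun s =>
  if h : ({t ∈ Set.Icc (0:ℝ) 1 | s ≤ sigmaFn g t}).Nonempty
  then sInf {t ∈ Set.Icc (0:ℝ) 1 | s ≤ sigmaFn g t} else 1

section SigmaTau

variable {g : ℝ → ℝ} (hg0 : ∀ r, 0 ≤ g r) (hgs : ∀ r, r ∉ Set.Icc (0:ℝ) 1 → g r = 0)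
  (hgi : Integrable g volume)

lemma sigma_zero : sigmaFn g 0 = 0 := intervalIntegral.integral_same

lemma sigma_sub (hgi : Integrable g volume) (u v : ℝ) :
    sigmaFn g v - sigmaFn g u = ∫ r in u..v, g r := by
  have := intervalIntegral.integral_add_adjacent_intervals
    (hgi.intervalIntegrable (a := 0) (b := u)) (hgi.intervalIntegrable (a := u) (b := v))
  simp only [sigmaFn]
  linarith

lemma sigma_mono (hg0 : ∀ r, 0 ≤ g r) (hgi : Integrable g volume) : Monotone (sigmaFn g) := by
  intro u v huv
  have h := sigma_sub hgi u v
  have h2 : 0 ≤ ∫ r in u..v, g r :=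
    intervalIntegral.integral_nonneg huv (fun r _ => hg0 r)
  linarith

lemma sigma_cont (hgi : Integrable g volume) : Continuous (sigmaFn g) :=
  hgi.continuous_primitive 0

lemma sigma_proj (hg0 : ∀ r, 0 ≤ g r) (hgs : ∀ r, r ∉ Set.Icc (0:ℝ) 1 → g r = 0)
    (hgi : Integrable g volume) (t : ℝ) :
    sigmaFn g t = sigmaFn g (min (max t 0) 1) := by
  rcases le_or_gt t 0 with ht0 | ht0
  · have hproj : min (max t 0) 1 = 0 := by
      rw [max_eq_right ht0, min_eq_left zero_le_one]
    rw [hproj, sigma_zero]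
    have h := sigma_sub hgi t 0
    rw [sigma_zero] at h
    have hz : ∫ r in t..0, g r = 0 := by
      rw [intervalIntegral.integral_of_le ht0, MeasureTheory.integral_Ioc_eq_integral_Ioo]
      rw [MeasureTheory.setIntegral_congr_fun measurableSet_Ioo
        (g := fun _ => (0:ℝ)) (fun r hr => hgs r (fun hr' => absurd hr.2 (not_lt.2 hr'.1)))]
      simp
    linarith
  · rcases le_or_gt t 1 with ht1 | ht1
    · rw [max_eq_left ht0.le, min_eq_left ht1]
    · have hproj : min (max t 0) 1 = 1 := by
        rw [max_eq_left ht0.le, min_eq_right ht1.le]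
      rw [hproj]
      have h := sigma_sub hgi 1 t
      have hz : ∫ r in (1:ℝ)..t, g r = 0 := by
        rw [intervalIntegral.integral_of_le ht1.le]
        rw [MeasureTheory.setIntegral_congr_fun measurableSet_Ioc
          (g := fun _ => (0:ℝ)) (fun r hr => hgs r (fun hr' => absurd hr'.2 (not_le.2 hr.1)))]
        simp
      linarith

lemma tau_mem (g : ℝ → ℝ) (s : ℝ) : tauFn g s ∈ Set.Icc (0:ℝ) 1 := by
  classical
  rw [tauFn]
  split_ifs with h
  · obtain ⟨t₀, ht₀⟩ := h
    constructor
    · exact le_csInf ⟨t₀, ht₀⟩ (fun t ht => ht.1.1)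
    · exact (csInf_le ⟨0, fun t ht => ht.1.1⟩ ht₀).trans ht₀.1.2
  · exact ⟨zero_le_one, le_refl 1⟩

lemma tau_set_nonempty {s : ℝ} (hs : s ≤ sigmaFn g 1) :
    ({t ∈ Set.Icc (0:ℝ) 1 | s ≤ sigmaFn g t}).Nonempty :=
  ⟨1, ⟨Set.right_mem_Icc.2 zero_le_one, hs⟩⟩

lemma tau_spec {s : ℝ} (hgi : Integrable g volume) (hs : s ≤ sigmaFn g 1) :
    s ≤ sigmaFn g (tauFn g s) := by
  have hne := tau_set_nonempty (g := g) hs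
  have hclosed : IsClosed {t ∈ Set.Icc (0:ℝ) 1 | s ≤ sigmaFn g t} :=
    isClosed_Icc.inter (isClosed_le continuous_const (sigma_cont hgi))
  have hmem := hclosed.csInf_mem hne ⟨0, fun t ht => ht.1.1⟩
  classical
  rw [tauFn, dif_pos hne]
  exact hmem.2

lemma tau_le_of_mem {s t : ℝ} (ht : t ∈ Set.Icc (0:ℝ) 1) (hst : s ≤ sigmaFn g t) :
    tauFn g s ≤ t := by
  classical
  rw [tauFn, dif_pos ⟨t, ht, hst⟩]
  exact csInf_le ⟨0, fun u hu => hu.1.1⟩ ⟨ht, hst⟩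

lemma sigma_tau {s : ℝ} (hg0 : ∀ r, 0 ≤ g r) (hgi : Integrable g volume)
    (h0 : 0 ≤ s) (hs : s ≤ sigmaFn g 1) : sigmaFn g (tauFn g s) = s := by
  refine le_antisymm ?_ (tau_spec hgi hs)
  by_contra hlt
  push_neg at hlt
  have hτ := tau_mem g s
  have hIVT : s ∈ sigmaFn g '' Set.Icc 0 (tauFn g s) := by
    apply intermediate_value_Icc hτ.1 ((sigma_cont hgi).continuousOn)
    rw [sigma_zero]
    exact ⟨h0, hlt.le⟩
  obtain ⟨t, htmem, htval⟩ := hIVT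
  have ht' : t ∈ Set.Icc (0:ℝ) 1 := ⟨htmem.1, htmem.2.trans hτ.2⟩
  have := tau_le_of_mem (g := g) ht' htval.ge
  have hmono := sigma_mono hg0 hgi this
  rw [htval] at hmono
  exact absurd hmono (not_le.2 hlt)

lemma tau_galois {u t : ℝ} (hg0 : ∀ r, 0 ≤ g r) (hgi : Integrable g volume)
    (h0 : 0 ≤ u) (hu : u ≤ sigmaFn g 1) (ht : t ∈ Set.Icc (0:ℝ) 1) :
    tauFn g u ≤ t ↔ u ≤ sigmaFn g t := by
  constructor
  · intro h
    have := sigma_mono hg0 hgi h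
    rw [sigma_tau hg0 hgi h0 hu] at this
    exact this
  · exact tau_le_of_mem ht

lemma tau_mono (g : ℝ → ℝ) : Monotone (tauFn g) := by
  intro s s' hss'
  classical
  rw [tauFn, tauFn]
  split_ifs with h1 h2 h2
  · exact csInf_le_csInf ⟨0, fun t ht => ht.1.1⟩ h2 (fun t ht => ⟨ht.1, hss'.trans ht.2⟩)
  · obtain ⟨t₀, ht₀⟩ := h1
    exact (csInf_le ⟨0, fun t ht => ht.1.1⟩ ht₀).trans ht₀.1.2
  · exact absurd ⟨h2.choose, ⟨h2.choose_spec.1, hss'.trans h2.choose_spec.2⟩⟩ h1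
  · exact le_refl 1

lemma tau_measurable (g : ℝ → ℝ) : Measurable (tauFn g) :=
  (tau_mono g).measurable

lemma tau_zero (hg0 : ∀ r, 0 ≤ g r) (hgi : Integrable g volume) : tauFn g 0 = 0 := by
  refine le_antisymm ?_ (tau_mem g 0).1
  apply tau_le_of_mem (Set.left_mem_Icc.2 zero_le_one)
  rw [sigma_zero]

end SigmaTau

section MapTau

variable {g : ℝ → ℝ}

lemma tau_le_iff (hg0 : ∀ r, 0 ≤ g r) (hgi : Integrable g volume)
    {u : ℝ} (h0 : 0 < u) (hu : u ≤ sigmaFn g 1) (b : ℝ) :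
    tauFn g u ≤ b ↔ u ≤ sigmaFn g (min (max b 0) 1) := by
  rcases le_or_gt 0 b with hb | hb
  · rw [max_eq_left hb]
    constructor
    · intro h
      exact (tau_galois hg0 hgi h0.le hu ⟨le_min hb zero_le_one, min_le_right _ _⟩).1
        (le_min h (tau_mem g u).2)
    · intro h
      exact ((tau_galois hg0 hgi h0.le hu ⟨le_min hb zero_le_one, min_le_right _ _⟩).2 h).trans
        (min_le_left _ _)
  · have hm : min (max b 0) 1 = 0 := by rw [max_eq_right hb.le, min_eq_left zero_le_one]
    rw [hm, sigma_zero]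
    constructor
    · intro h; linarith [(tau_mem g u).1]
    · intro h; linarith

lemma map_tau (hg0 : ∀ r, 0 ≤ g r) (hgs : ∀ r, r ∉ Set.Icc (0:ℝ) 1 → g r = 0)
    (hgi : Integrable g volume) {s s' : ℝ} (h0 : 0 ≤ s) (hss : s ≤ s') (h1 : s' ≤ sigmaFn g 1) :
    Measure.map (tauFn g) (volume.restrict (Set.Ioc s s')) =
      (volume.restrict (Set.Ioc (tauFn g s) (tauFn g s'))).withDensity
        (fun r => ENNReal.ofReal (g r)) := by
  have hτm := tau_measurable g
  have hστ : ∀ v : ℝ, 0 ≤ v → v ≤ sigmaFn g 1 → sigmaFn g (tauFn g v) = v :=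
    fun v hv hv' => sigma_tau hg0 hgi hv hv'
  have hval : ∀ a b : ℝ,
      Measure.map (tauFn g) (volume.restrict (Set.Ioc s s')) (Set.Ioc a b) =
        ENNReal.ofReal (min (sigmaFn g b) s' - max (sigmaFn g a) s) := by
    intro a b
    rw [Measure.map_apply hτm measurableSet_Ioc,
      Measure.restrict_apply (hτm measurableSet_Ioc)]
    have hset : tauFn g ⁻¹' (Set.Ioc a b) ∩ Set.Ioc s s' =
        Set.Ioc (max (sigmaFn g a) s) (min (sigmaFn g b) s') := by
      ext u
      simp only [Set.mem_inter_iff, Set.mem_preimage, Set.mem_Ioc, max_lt_iff, le_min_iff]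
      constructor
      · rintro ⟨⟨hau, hub⟩, hsu, hus⟩
        have h0u : 0 < u := lt_of_le_of_lt h0 hsu
        have huT : u ≤ sigmaFn g 1 := hus.trans h1
        refine ⟨⟨?_, hsu⟩, ?_, hus⟩
        · rw [sigma_proj hg0 hgs hgi a]
          by_contra hc
          push_neg at hc
          exact absurd ((tau_le_iff hg0 hgi h0u huT a).2 hc) (not_le.2 hau)
        · rw [sigma_proj hg0 hgs hgi b]
          exact (tau_le_iff hg0 hgi h0u huT b).1 hub
      · rintro ⟨⟨hau, hsu⟩, hub, hus⟩
        have h0u : 0 < u := lt_of_le_of_lt h0 hsu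
        have huT : u ≤ sigmaFn g 1 := hus.trans h1
        rw [sigma_proj hg0 hgs hgi a] at hau
        rw [sigma_proj hg0 hgs hgi b] at hub
        refine ⟨⟨?_, (tau_le_iff hg0 hgi h0u huT b).2 hub⟩, hsu, hus⟩
        by_contra hc
        push_neg at hc
        exact absurd ((tau_le_iff hg0 hgi h0u huT a).1 hc) (not_le.2 hau)
    rw [hset, Real.volume_Ioc]
  have hval' : ∀ a b : ℝ,
      (volume.restrict (Set.Ioc (tauFn g s) (tauFn g s'))).withDensity
        (fun r => ENNReal.ofReal (g r)) (Set.Ioc a b) =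
        ENNReal.ofReal (min (sigmaFn g b) s' - max (sigmaFn g a) s) := by
    intro a b
    rw [withDensity_apply _ measurableSet_Ioc, Measure.restrict_restrict measurableSet_Ioc,
      Set.Ioc_inter_Ioc]
    have hσc : sigmaFn g (max a (tauFn g s)) = max (sigmaFn g a) s := by
      rw [(sigma_mono hg0 hgi).map_max, hστ s h0 (hss.trans h1)]
    have hσd : sigmaFn g (min b (tauFn g s')) = min (sigmaFn g b) s' := by
      rw [(sigma_mono hg0 hgi).map_min, hστ s' (h0.trans hss) h1]
    rcases le_or_gt (max a (tauFn g s)) (min b (tauFn g s')) with hcd | hcd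
    · rw [← ofReal_intervalIntegral_eq_lintegral hcd hgi.integrableOn (fun r _ => hg0 r)]
      congr 1
      have := sigma_sub hgi (max a (tauFn g s)) (min b (tauFn g s'))
      rw [hσc, hσd] at this
      linarith
    · rw [Set.Ioc_eq_empty (not_lt.2 hcd.le), Measure.restrict_empty, lintegral_zero_measure]
      symm
      rw [ENNReal.ofReal_eq_zero]
      have := sigma_mono hg0 hgi hcd.le
      rw [hσc, hσd] at this
      linarith
  haveI hfin1 : IsFiniteMeasure (Measure.map (tauFn g) (volume.restrict (Set.Ioc s s'))) := by
    constructor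
    rw [Measure.map_apply hτm MeasurableSet.univ, Set.preimage_univ, Measure.restrict_apply_univ]
    exact measure_Ioc_lt_top
  refine Measure.ext_of_Ioc_finite _ _ ?_ (fun a b _ => (hval a b).trans (hval' a b).symm)
  · have hττ : tauFn g s ≤ tauFn g s' := tau_mono g hss
    rw [Measure.map_apply hτm MeasurableSet.univ, Set.preimage_univ, Measure.restrict_apply_univ,
      Real.volume_Ioc, withDensity_apply _ MeasurableSet.univ, setLIntegral_univ,
      ← ofReal_intervalIntegral_eq_lintegral hττ hgi.integrableOn (fun r _ => hg0 r)]
    congr 1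
    have := sigma_sub hgi (tauFn g s) (tauFn g s')
    rw [hστ s h0 (hss.trans h1), hστ s' (h0.trans hss) h1] at this
    linarith

end MapTau

lemma actionCost_antitone {X : Type*} [MetricSpace X] (G : X → ℝ) (x y : X) (hGy : G y = 0)
    {T₁ T₂ : ℝ} (h0 : 0 ≤ T₁) (h12 : T₁ ≤ T₂) :
    actionCost G T₂ x y ≤ actionCost G T₁ x y := by
  apply sInf_le_sInf
  rintro c ⟨γ, m, hγ, hγx, hγy, husp, hsq, rfl⟩
  classical
  refine ⟨fun t => γ (min t T₁), fun t => if t ≤ T₁ then m t else 0, ?_, ?_, ?_, ?_, ?_, ?_⟩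
  · exact hγ.comp ((continuous_id.min continuous_const).continuousOn)
      (fun t ht => ⟨le_min ht.1 h0, min_le_right _ _⟩)
  · simp only; rw [min_eq_left h0]; exact hγx
  · simp only; rw [min_eq_right h12]; exact hγy
  · refine ⟨?_, ?_, ?_⟩
    · intro r hr
      simp only
      by_cases h : r ≤ T₁
      · rw [if_pos h]; exact husp.1 r ⟨hr.1, h⟩
      · rw [if_neg h]
    · -- interval integrability on [0, T₂]
      have i1 : IntervalIntegrable (fun t => if t ≤ T₁ then m t else 0) volume 0 T₁ := by
        rw [intervalIntegrable_iff_integrableOn_Ioc_of_le h0]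
        exact (husp.2.1.1).congr_fun (fun t ht => (if_pos ht.2).symm) measurableSet_Ioc
      have i2 : IntervalIntegrable (fun t => if t ≤ T₁ then m t else 0) volume T₁ T₂ := by
        rw [intervalIntegrable_iff_integrableOn_Ioc_of_le h12]
        exact (integrableOn_zero).congr_fun (fun t ht => (if_neg (not_le.2 ht.1)).symm)
          measurableSet_Ioc
      exact i1.trans i2
    · intro s t hs hst ht
      simp only
      have hmin : ∀ u : ℝ, 0 ≤ u → min u T₁ ∈ Set.Icc 0 T₁ := fun u hu =>
        ⟨le_min hu h0, min_le_right _ _⟩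
      rcases le_or_gt t T₁ with htT | htT
      · rw [min_eq_left (hst.trans htT), min_eq_left htT]
        refine (husp.2.2 s t hs hst htT).trans (le_of_eq ?_)
        apply intervalIntegral.integral_congr
        intro r hr
        rw [Set.uIcc_of_le hst] at hr
        exact (if_pos (hr.2.trans htT)).symm
      · rcases le_or_gt s T₁ with hsT | hsT
        · rw [min_eq_left hsT, min_eq_right htT.le]
          have key : dist (γ s) (γ T₁) ≤ ∫ r in s..T₁, m r := husp.2.2 s T₁ hs hsT le_rfl
          have hsplit : (∫ r in s..t, if r ≤ T₁ then m r else 0) =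
              (∫ r in s..T₁, if r ≤ T₁ then m r else 0) +
                ∫ r in T₁..t, if r ≤ T₁ then m r else 0 := by
            symm
            apply intervalIntegral.integral_add_adjacent_intervals
            · rw [intervalIntegrable_iff_integrableOn_Ioc_of_le hsT]
              exact ((husp.2.1.1).mono_set (Set.Ioc_subset_Ioc hs le_rfl)).congr_fun
                (fun r hr => (if_pos hr.2).symm) measurableSet_Ioc
            · rw [intervalIntegrable_iff_integrableOn_Ioc_of_le htT.le]
              exact (integrableOn_zero).congr_fun
                (fun r hr => (if_neg (not_le.2 hr.1)).symm) measurableSet_Ioc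
          have h1 : (∫ r in s..T₁, if r ≤ T₁ then m r else 0) = ∫ r in s..T₁, m r := by
            apply intervalIntegral.integral_congr
            intro r hr
            rw [Set.uIcc_of_le hsT] at hr
            exact if_pos hr.2
          have h2 : (∫ r in T₁..t, if r ≤ T₁ then m r else 0) = 0 := by
            rw [intervalIntegral.integral_of_le htT.le,
              MeasureTheory.setIntegral_congr_fun measurableSet_Ioc
                (g := fun _ => (0:ℝ)) (fun r hr => if_neg (not_le.2 hr.1))]
            simp
          rw [hsplit, h1, h2, add_zero]
          exact key
        · rw [min_eq_right hsT.le, min_eq_right htT.le, dist_self]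
          apply intervalIntegral.integral_nonneg hst
          intro u hu
          rw [if_neg (not_le.2 (lt_of_lt_of_le hsT hu.1))]
  · -- square integrability
    have i1 : IntervalIntegrable (fun t => (if t ≤ T₁ then m t else 0) ^ 2) volume 0 T₁ := by
      rw [intervalIntegrable_iff_integrableOn_Ioc_of_le h0]
      exact (hsq.1).congr_fun (fun t ht => by rw [if_pos ht.2]) measurableSet_Ioc
    have i2 : IntervalIntegrable (fun t => (if t ≤ T₁ then m t else 0) ^ 2) volume T₁ T₂ := by
      rw [intervalIntegrable_iff_integrableOn_Ioc_of_le h12]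
      exact (integrableOn_zero).congr_fun
        (fun t ht => by rw [if_neg (not_le.2 ht.1)]; ring) measurableSet_Ioc
    exact i1.trans i2
  · -- cost equality
    rw [← Set.Ioc_union_Ioc_eq_Ioc h0 h12,
      lintegral_union measurableSet_Ioc (Set.Ioc_disjoint_Ioc_of_le le_rfl)]
    have h1 : ∫⁻ t in Set.Ioc 0 T₁,
        ENNReal.ofReal ((1/2) * (if t ≤ T₁ then m t else 0) ^ 2 +
          (1/2) * (G (γ (min t T₁))) ^ 2) =
        ∫⁻ t in Set.Ioc (0:ℝ) T₁, ENNReal.ofReal ((1/2) * (m t) ^ 2 + (1/2) * (G (γ t)) ^ 2) := by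
      apply setLIntegral_congr_fun measurableSet_Ioc
      intro t ht
      beta_reduce
      rw [if_pos ht.2, min_eq_left ht.2]
    have h2 : ∫⁻ t in Set.Ioc T₁ T₂,
        ENNReal.ofReal ((1/2) * (if t ≤ T₁ then m t else 0) ^ 2 +
          (1/2) * (G (γ (min t T₁))) ^ 2) = 0 := by
      rw [setLIntegral_congr_fun measurableSet_Ioc (g := fun _ => (0:ℝ≥0∞))
        (fun t ht => by
          rw [if_neg (not_le.2 ht.1), min_eq_right ht.1.le, hγy, hGy]
          norm_num)]
      simp
    rw [h1, h2, add_zero]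

lemma finslerCost_le_actionCost {X : Type*} [MetricSpace X] [MeasurableSpace X] [BorelSpace X]
    (G : X → ℝ) (hGmeas : Measurable G) (x y : X) {T : ℝ} (hT : 0 < T) :
    finslerCost G x y ≤ actionCost G T x y := by
  apply le_sInf
  rintro c ⟨γ, m, hγ, hγx, hγy, husp, hsq, rfl⟩
  have hmain : finslerCost G x y ≤ ∫⁻ t in Set.Ioc (0:ℝ) T, ENNReal.ofReal (m t * G (γ t)) := by
    apply sInf_le
    refine ⟨fun u => γ (T * u), fun u => T * m (T * u), ?_, ?_, ?_, ⟨?_, ?_, ?_⟩, ?_⟩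
    · exact hγ.comp ((continuous_const.mul continuous_id).continuousOn)
        (fun u hu => ⟨mul_nonneg hT.le hu.1, by
          calc T * u ≤ T * 1 := by nlinarith [hu.2]
            _ = T := mul_one T⟩)
    · simp only; rw [mul_zero]; exact hγx
    · simp only; rw [mul_one]; exact hγy
    · intro r hr
      simp only
      have : T * r ∈ Set.Icc 0 T := ⟨mul_nonneg hT.le hr.1, by nlinarith [hr.2]⟩
      exact mul_nonneg hT.le (husp.1 _ this)
    · have := (husp.2.1.comp_mul_left (c := T)).const_mul T
      rwa [zero_div, div_self hT.ne'] at this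
    · intro s t hs hst ht
      simp only
      have hb1 : T * s ≤ T * t := by nlinarith
      have hb2 : T * t ≤ T := by nlinarith
      have key := husp.2.2 (T * s) (T * t) (mul_nonneg hT.le hs) hb1 hb2
      rw [intervalIntegral.integral_const_mul]
      have hcv := intervalIntegral.smul_integral_comp_mul_left (a := s) (b := t) m T
      rw [smul_eq_mul] at hcv
      rw [hcv]
      exact key
    · -- change of variables for the cost integral
      have hmF : AEMeasurable (fun t => ENNReal.ofReal (m t * G (γ t)))
          (volume.restrict (Set.Ioc 0 T)) := by
        have h1 : AEMeasurable m (volume.restrict (Set.Ioc 0 T)) :=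
          husp.2.1.1.aemeasurable
        have h2 : AEMeasurable (fun t => G (γ t)) (volume.restrict (Set.Ioc 0 T)) := by
          have hh : AEMeasurable γ (volume.restrict (Set.Icc 0 T)) :=
            hγ.aemeasurable measurableSet_Icc
          exact hGmeas.comp_aemeasurable
            (hh.mono_measure (Measure.restrict_mono Set.Ioc_subset_Icc_self le_rfl))
        exact (h1.mul h2).ennreal_ofReal
      have hpre : (fun u : ℝ => T * u) ⁻¹' (Set.Ioc 0 T) = Set.Ioc 0 1 := by
        ext u
        simp only [Set.mem_preimage, Set.mem_Ioc]
        constructor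
        · rintro ⟨h1, h2⟩
          constructor
          · nlinarith
          · nlinarith
        · rintro ⟨h1, h2⟩
          constructor
          · nlinarith
          · nlinarith
      have hmap : Measure.map (fun u : ℝ => T * u) (volume.restrict (Set.Ioc 0 1)) =
          (ENNReal.ofReal T⁻¹) • volume.restrict (Set.Ioc 0 T) := by
        rw [← hpre, ← Measure.restrict_map (measurable_const_mul T) measurableSet_Ioc]
        have := Real.map_volume_mul_left hT.ne'
        rw [show ((fun u : ℝ => T * u) = (T * ·)) from rfl, this,
          abs_of_pos (inv_pos.2 hT), Measure.restrict_smul]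
      calc ∫⁻ t in Set.Ioc (0:ℝ) T, ENNReal.ofReal (m t * G (γ t))
          = (ENNReal.ofReal T * ENNReal.ofReal T⁻¹) *
            ∫⁻ t in Set.Ioc (0:ℝ) T, ENNReal.ofReal (m t * G (γ t)) := by
            rw [← ENNReal.ofReal_mul hT.le, mul_inv_cancel₀ hT.ne', ENNReal.ofReal_one, one_mul]
        _ = ENNReal.ofReal T * ∫⁻ t, ENNReal.ofReal (m t * G (γ t))
              ∂((ENNReal.ofReal T⁻¹) • volume.restrict (Set.Ioc 0 T)) := by
            rw [lintegral_smul_measure, smul_eq_mul, mul_assoc]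
        _ = ENNReal.ofReal T * ∫⁻ t, ENNReal.ofReal (m t * G (γ t))
              ∂(Measure.map (fun u : ℝ => T * u) (volume.restrict (Set.Ioc 0 1))) := by
            rw [hmap]
        _ = ENNReal.ofReal T * ∫⁻ u in Set.Ioc (0:ℝ) 1,
              ENNReal.ofReal (m (T * u) * G (γ (T * u))) := by
            congr 1
            exact (lintegral_map' (g := fun u : ℝ => T * u)
              (f := fun t => ENNReal.ofReal (m t * G (γ t))) (by
                rw [hmap]
                exact (aemeasurable_smul_measure_iff (by simp [ENNReal.ofReal_eq_zero,
                  not_le, inv_pos, hT])).2 hmF)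
              (measurable_const_mul T).aemeasurable)
        _ = ∫⁻ u in Set.Ioc (0:ℝ) 1,
              ENNReal.ofReal (T * m (T * u) * G (γ (T * u))) := by
            rw [← lintegral_const_mul' _ _ ENNReal.ofReal_ne_top]
            apply lintegral_congr
            intro u
            rw [mul_assoc, ENNReal.ofReal_mul hT.le]
  refine hmain.trans (lintegral_mono_ae ((ae_restrict_iff' measurableSet_Ioc).2
    (Filter.Eventually.of_forall (fun t ht => ?_))))
  apply ENNReal.ofReal_le_ofReal
  nlinarith [sq_nonneg (m t - G (γ t))]

lemma actionCost_le_of_finslerPair {X : Type*} [MetricSpace X] [MeasurableSpace X] [BorelSpace X]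
    (G : X → ℝ) (hG0 : ∀ x, 0 ≤ G x) (hGmeas : Measurable G) (x y : X)
    (γ : ℝ → X) (m : ℝ → ℝ) (hγ : ContinuousOn γ (Set.Icc 0 1)) (hγx : γ 0 = x) (hγy : γ 1 = y)
    (husp : IsUpperSpeedOn γ m 0 1) {δ : ℝ} (hδ : 0 < δ)
    (hfin : (∫⁻ t in Set.Ioc (0:ℝ) 1, ENNReal.ofReal (m t * G (γ t))) ≠ ⊤) :
    ∃ T : ℝ, 0 ≤ T ∧ actionCost G T x y ≤
      (∫⁻ t in Set.Ioc (0:ℝ) 1, ENNReal.ofReal (m t * G (γ t))) +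
        ENNReal.ofReal (δ * (∫ r in (0:ℝ)..1, m r) / 2) := by
  -- Step 1: a measurable nonnegative version of m supported on [0,1]
  have hmio : IntegrableOn m (Set.Ioc 0 1) volume := husp.2.1.1
  have hmaem : AEMeasurable m (volume.restrict (Set.Ioc (0:ℝ) 1)) := hmio.aemeasurable
  set m' : ℝ → ℝ := Set.indicator (Set.Icc 0 1) (fun r => max (hmaem.mk m r) 0) with hm'def
  have hm'meas : Measurable m' :=
    ((hmaem.measurable_mk).max measurable_const).indicator measurableSet_Icc
  have hm'0 : ∀ r, 0 ≤ m' r := fun r => Set.indicator_nonneg (fun r _ => le_max_right _ _) r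
  have hm'ae : m' =ᵐ[volume.restrict (Set.Ioc (0:ℝ) 1)] m := by
    filter_upwards [hmaem.ae_eq_mk, ae_restrict_mem measurableSet_Ioc] with r h1 h2
    have hIcc : r ∈ Set.Icc (0:ℝ) 1 := ⟨h2.1.le, h2.2⟩
    rw [hm'def]
    simp only [Set.indicator_of_mem hIcc]
    rw [← h1]
    exact max_eq_left (husp.1 r hIcc)
  have hm'int : Integrable m' volume := by
    rw [hm'def, integrable_indicator_iff measurableSet_Icc, integrableOn_Icc_iff_integrableOn_Ioc]
    apply hmio.congr
    filter_upwards [hmaem.ae_eq_mk, ae_restrict_mem measurableSet_Ioc] with r h1 h2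
    have hIcc : r ∈ Set.Icc (0:ℝ) 1 := ⟨h2.1.le, h2.2⟩
    rw [← h1]
    exact (max_eq_left (husp.1 r hIcc)).symm
  have hIeq : ∀ u v : ℝ, 0 ≤ u → u ≤ v → v ≤ 1 → (∫ r in u..v, m' r) = ∫ r in u..v, m r := by
    intro u v hu huv hv
    rw [intervalIntegral.integral_of_le huv, intervalIntegral.integral_of_le huv]
    exact integral_congr_ae (ae_restrict_of_ae_restrict_of_subset (Set.Ioc_subset_Ioc hu hv) hm'ae)
  have husp' : IsUpperSpeedOn γ m' 0 1 :=
    ⟨fun r _ => hm'0 r, hm'int.intervalIntegrable,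
     fun s t hs hst ht => by rw [hIeq s t hs hst ht]; exact husp.2.2 s t hs hst ht⟩
  -- Step 2: measurability of G ∘ γ
  have hγae : AEMeasurable γ (volume.restrict (Set.Icc (0:ℝ) 1)) :=
    hγ.aemeasurable measurableSet_Icc
  have hGγ : AEMeasurable (fun r => G (γ r)) (volume.restrict (Set.Icc (0:ℝ) 1)) :=
    hGmeas.comp_aemeasurable hγae
  have hGpos : ∀ r, (0:ℝ) < G (γ r) + δ := fun r => add_pos_of_nonneg_of_pos (hG0 _) hδ
  -- Step 3: the density g
  set g : ℝ → ℝ := Set.indicator (Set.Icc 0 1) (fun r => m' r / (G (γ r) + δ)) with hgdef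
  have hg0 : ∀ r, 0 ≤ g r := fun r => Set.indicator_nonneg
    (fun r _ => div_nonneg (hm'0 r) (hGpos r).le) r
  have hgs : ∀ r, r ∉ Set.Icc (0:ℝ) 1 → g r = 0 := fun r hr => Set.indicator_of_notMem hr _
  have hgmul : ∀ r ∈ Set.Icc (0:ℝ) 1, (G (γ r) + δ) * g r = m' r := by
    intro r hr
    rw [hgdef]
    simp only [Set.indicator_of_mem hr]
    rw [mul_comm, div_mul_cancel₀ _ (hGpos r).ne']
  have hgaem : AEMeasurable g volume := (aemeasurable_indicator_iff measurableSet_Icc).2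
    ((hm'meas.aemeasurable.restrict).div (hGγ.add aemeasurable_const))
  have hgle : ∀ r, g r ≤ δ⁻¹ * m' r := by
    intro r
    by_cases hr : r ∈ Set.Icc (0:ℝ) 1
    · rw [hgdef]
      simp only [Set.indicator_of_mem hr]
      rw [inv_mul_eq_div]
      apply div_le_div_of_nonneg_left (hm'0 r) hδ
      linarith [hG0 (γ r)]
    · rw [hgs r hr]
      exact mul_nonneg (inv_nonneg.2 hδ.le) (hm'0 r)
  have hgint : Integrable g volume := by
    apply Integrable.mono' (hm'int.const_mul δ⁻¹) hgaem.aestronglyMeasurable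
    exact Filter.Eventually.of_forall
      (fun r => by rw [Real.norm_of_nonneg (hg0 r)]; exact hgle r)
  -- Step 4: the total time T
  set T := sigmaFn g 1 with hTdef
  have hT0 : 0 ≤ T := by
    have := sigma_mono hg0 hgint (zero_le_one (α := ℝ))
    rwa [sigma_zero] at this
  set L' := ∫ r in (0:ℝ)..1, m' r with hL'def
  have hL'eq : L' = ∫ r in (0:ℝ)..1, m r := hIeq 0 1 le_rfl zero_le_one le_rfl
  have hTle : T ≤ δ⁻¹ * L' := by
    have h1 : T = ∫ r in (0:ℝ)..1, g r := by
      have := sigma_sub hgint 0 1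
      rw [sigma_zero] at this
      linarith
    rw [h1, hL'def, ← intervalIntegral.integral_const_mul]
    exact intervalIntegral.integral_mono_on zero_le_one hgint.intervalIntegrable
      ((hm'int.const_mul δ⁻¹).intervalIntegrable) (fun r _ => hgle r)
  -- Step 5: transfer formula
  have hτmem := tau_mem g
  have hτm := tau_measurable g
  have transfer : ∀ s s' : ℝ, 0 ≤ s → s ≤ s' → s' ≤ T → ∀ f : ℝ → ℝ≥0∞,
      AEMeasurable f (volume.restrict (Set.Icc (0:ℝ) 1)) →
      (∫⁻ u in Set.Ioc s s', f (tauFn g u)) =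
        ∫⁻ r in Set.Ioc (tauFn g s) (tauFn g s'), f r * ENNReal.ofReal (g r) := by
    intro s s' hs hss hs'T f hf
    have hmap := map_tau hg0 hgs hgint hs hss hs'T
    have hsub : Set.Ioc (tauFn g s) (tauFn g s') ⊆ Set.Icc (0:ℝ) 1 := fun r hr =>
      ⟨(hτmem s).1.trans hr.1.le, hr.2.trans (hτmem s').2⟩
    have hfr : AEMeasurable f (volume.restrict (Set.Ioc (tauFn g s) (tauFn g s'))) :=
      hf.mono_measure (Measure.restrict_mono hsub le_rfl)
    have hfwd : AEMeasurable f
        ((volume.restrict (Set.Ioc (tauFn g s) (tauFn g s'))).withDensity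
          (fun r => ENNReal.ofReal (g r))) :=
      hfr.mono_ac (withDensity_absolutelyContinuous _ _)
    calc (∫⁻ u in Set.Ioc s s', f (tauFn g u))
        = ∫⁻ r, f r ∂(Measure.map (tauFn g) (volume.restrict (Set.Ioc s s'))) :=
          (lintegral_map' (hmap.symm ▸ hfwd) hτm.aemeasurable).symm
      _ = ∫⁻ r, f r ∂((volume.restrict (Set.Ioc (tauFn g s) (tauFn g s'))).withDensity
            (fun r => ENNReal.ofReal (g r))) := by rw [hmap]
      _ = ∫⁻ r, ((fun r => ENNReal.ofReal (g r)) * f) r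
            ∂(volume.restrict (Set.Ioc (tauFn g s) (tauFn g s'))) :=
          lintegral_withDensity_eq_lintegral_mul₀' (hgaem.ennreal_ofReal.restrict) hfwd
      _ = ∫⁻ r in Set.Ioc (tauFn g s) (tauFn g s'), f r * ENNReal.ofReal (g r) :=
          lintegral_congr (fun r => mul_comm _ _)
  -- Step 6: γ is constant where σ is flat
  have flat : ∀ u v : ℝ, u ∈ Set.Icc (0:ℝ) 1 → v ∈ Set.Icc (0:ℝ) 1 → u ≤ v →
      sigmaFn g u = sigmaFn g v → γ u = γ v := by
    intro u v hu hv huv hσ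
    have hiz : ∫ r in Set.Ioc u v, g r = 0 := by
      have h := sigma_sub hgint u v
      rw [← intervalIntegral.integral_of_le huv]
      linarith
    have hgz : g =ᵐ[volume.restrict (Set.Ioc u v)] 0 :=
      (integral_eq_zero_iff_of_nonneg_ae (Filter.Eventually.of_forall hg0)
        hgint.integrableOn).1 hiz
    have hmz : m' =ᵐ[volume.restrict (Set.Ioc u v)] 0 := by
      filter_upwards [hgz, ae_restrict_mem measurableSet_Ioc] with r h1 h2
      have hrIcc : r ∈ Set.Icc (0:ℝ) 1 := ⟨hu.1.trans h2.1.le, h2.2.trans hv.2⟩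
      have h1' : g r = 0 := h1
      have := hgmul r hrIcc
      rw [h1', mul_zero] at this
      exact this.symm
    have him : ∫ r in u..v, m' r = 0 := by
      rw [intervalIntegral.integral_of_le huv]
      exact integral_eq_zero_of_ae hmz
    have hd := husp'.2.2 u v hu.1 huv hv.2
    rw [him] at hd
    exact dist_le_zero.1 hd
  -- Step 7: endpoints
  have hτ0 : tauFn g 0 = 0 := tau_zero hg0 hgint
  have hηT : γ (tauFn g T) = y := by
    rw [← hγy]
    apply flat (tauFn g T) 1 (hτmem T) (Set.right_mem_Icc.2 zero_le_one) (hτmem T).2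
    rw [sigma_tau hg0 hgint hT0 le_rfl]
  -- Step 8: the new speed and its integrability
  set η : ℝ → X := fun u => γ (tauFn g u) with hηdef
  set mt : ℝ → ℝ := fun u => G (η u) + δ with hmtdef
  have hmt0 : ∀ u, 0 ≤ mt u := fun u => add_nonneg (hG0 _) hδ.le
  have hGηaem : AEMeasurable (fun u => G (η u)) (volume.restrict (Set.Ioc (0:ℝ) T)) := by
    have h1 : AEMeasurable (fun r => G (γ r))
        (Measure.map (tauFn g) (volume.restrict (Set.Ioc (0:ℝ) T))) := by
      rw [map_tau hg0 hgs hgint le_rfl hT0 le_rfl]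
      have hsub : Set.Ioc (tauFn g 0) (tauFn g T) ⊆ Set.Icc (0:ℝ) 1 := fun r hr =>
        ⟨(hτmem 0).1.trans hr.1.le, hr.2.trans (hτmem T).2⟩
      exact (hGγ.mono_measure (Measure.restrict_mono hsub le_rfl)).mono_ac
        (withDensity_absolutelyContinuous _ _)
    exact h1.comp_aemeasurable hτm.aemeasurable
  have hbound1 : (∫⁻ u in Set.Ioc (0:ℝ) T, ENNReal.ofReal (G (η u))) ≤ ENNReal.ofReal L' := by
    have ht := transfer 0 T le_rfl hT0 le_rfl (fun r => ENNReal.ofReal (G (γ r)))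
      hGγ.ennreal_ofReal
    rw [hτ0] at ht
    calc (∫⁻ u in Set.Ioc (0:ℝ) T, ENNReal.ofReal (G (η u)))
        = ∫⁻ r in Set.Ioc (0:ℝ) (tauFn g T),
            ENNReal.ofReal (G (γ r)) * ENNReal.ofReal (g r) := ht
      _ ≤ ∫⁻ r in Set.Ioc (0:ℝ) 1, ENNReal.ofReal (G (γ r)) * ENNReal.ofReal (g r) :=
          lintegral_mono_set (Set.Ioc_subset_Ioc le_rfl (hτmem T).2)
      _ ≤ ∫⁻ r in Set.Ioc (0:ℝ) 1, ENNReal.ofReal (m' r) := by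
          apply lintegral_mono_ae
          apply (ae_restrict_iff' measurableSet_Ioc).2
          apply Filter.Eventually.of_forall
          intro r hr
          have hrIcc : r ∈ Set.Icc (0:ℝ) 1 := ⟨hr.1.le, hr.2⟩
          rw [← ENNReal.ofReal_mul (hG0 _)]
          apply ENNReal.ofReal_le_ofReal
          nlinarith [hgmul r hrIcc, hg0 r, hδ.le]
      _ = ENNReal.ofReal L' := (ofReal_intervalIntegral_eq_lintegral zero_le_one
          hm'int.integrableOn (fun r _ => hm'0 r)).symm
  have hbound2 : (∫⁻ u in Set.Ioc (0:ℝ) T, ENNReal.ofReal (G (η u) * (G (η u) + δ))) ≤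
      ∫⁻ t in Set.Ioc (0:ℝ) 1, ENNReal.ofReal (m t * G (γ t)) := by
    have ht := transfer 0 T le_rfl hT0 le_rfl
      (fun r => ENNReal.ofReal (G (γ r) * (G (γ r) + δ)))
      ((hGγ.mul (hGγ.add aemeasurable_const)).ennreal_ofReal)
    rw [hτ0] at ht
    calc (∫⁻ u in Set.Ioc (0:ℝ) T, ENNReal.ofReal (G (η u) * (G (η u) + δ)))
        = ∫⁻ r in Set.Ioc (0:ℝ) (tauFn g T),
            ENNReal.ofReal (G (γ r) * (G (γ r) + δ)) * ENNReal.ofReal (g r) := ht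
      _ ≤ ∫⁻ r in Set.Ioc (0:ℝ) 1,
            ENNReal.ofReal (G (γ r) * (G (γ r) + δ)) * ENNReal.ofReal (g r) :=
          lintegral_mono_set (Set.Ioc_subset_Ioc le_rfl (hτmem T).2)
      _ = ∫⁻ r in Set.Ioc (0:ℝ) 1, ENNReal.ofReal (m' r * G (γ r)) := by
          apply setLIntegral_congr_fun measurableSet_Ioc
          intro r hr
          have hrIcc : r ∈ Set.Icc (0:ℝ) 1 := ⟨hr.1.le, hr.2⟩
          beta_reduce
          rw [← ENNReal.ofReal_mul (mul_nonneg (hG0 _) (hGpos r).le)]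
          congr 1
          rw [mul_assoc, hgmul r hrIcc, mul_comm]
      _ = ∫⁻ t in Set.Ioc (0:ℝ) 1, ENNReal.ofReal (m t * G (γ t)) := by
          apply lintegral_congr_ae
          filter_upwards [hm'ae] with r h
          rw [h]
  have hmtIcc : IntegrableOn mt (Set.Ioc (0:ℝ) T) volume := by
    refine ⟨(hGηaem.add aemeasurable_const).aestronglyMeasurable, ?_⟩
    rw [hasFiniteIntegral_iff_ofReal (Filter.Eventually.of_forall hmt0)]
    calc (∫⁻ u in Set.Ioc (0:ℝ) T, ENNReal.ofReal (mt u))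
        ≤ ∫⁻ u in Set.Ioc (0:ℝ) T, (ENNReal.ofReal (G (η u)) + ENNReal.ofReal δ) :=
          lintegral_mono (fun u => ENNReal.ofReal_add_le)
      _ = (∫⁻ u in Set.Ioc (0:ℝ) T, ENNReal.ofReal (G (η u))) +
            ENNReal.ofReal δ * volume (Set.Ioc (0:ℝ) T) := by
          rw [lintegral_add_right' _ aemeasurable_const, setLIntegral_const]
      _ < ⊤ := ENNReal.add_lt_top.2 ⟨lt_of_le_of_lt hbound1 ENNReal.ofReal_lt_top,
          ENNReal.mul_lt_top ENNReal.ofReal_lt_top measure_Ioc_lt_top⟩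
  have hmtII : IntervalIntegrable mt volume 0 T := by
    rw [intervalIntegrable_iff_integrableOn_Ioc_of_le hT0]
    exact hmtIcc
  have hmtsqII : IntervalIntegrable (fun u => (mt u) ^ 2) volume 0 T := by
    rw [intervalIntegrable_iff_integrableOn_Ioc_of_le hT0]
    refine ⟨((hGηaem.add aemeasurable_const).pow_const 2).aestronglyMeasurable, ?_⟩
    rw [hasFiniteIntegral_iff_ofReal (Filter.Eventually.of_forall (fun u => sq_nonneg _))]
    calc (∫⁻ u in Set.Ioc (0:ℝ) T, ENNReal.ofReal ((mt u) ^ 2))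
        ≤ ∫⁻ u in Set.Ioc (0:ℝ) T,
            (2 * ENNReal.ofReal (G (η u) * (G (η u) + δ)) + ENNReal.ofReal (2 * δ ^ 2)) := by
          apply lintegral_mono
          intro u
          have h1 : (mt u) ^ 2 ≤ 2 * (G (η u) * (G (η u) + δ)) + 2 * δ ^ 2 := by
            have := hG0 (η u)
            simp only [hmtdef]
            nlinarith
          refine le_trans (ENNReal.ofReal_le_ofReal h1) ?_
          refine le_trans ENNReal.ofReal_add_le ?_
          apply add_le_add_left
          rw [ENNReal.ofReal_mul (by norm_num : (0:ℝ) ≤ 2), ENNReal.ofReal_ofNat]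
      _ = 2 * (∫⁻ u in Set.Ioc (0:ℝ) T, ENNReal.ofReal (G (η u) * (G (η u) + δ))) +
            ENNReal.ofReal (2 * δ ^ 2) * volume (Set.Ioc (0:ℝ) T) := by
          rw [lintegral_add_right' _ aemeasurable_const, setLIntegral_const,
            lintegral_const_mul' _ _ (by norm_num : (2:ℝ≥0∞) ≠ ⊤)]
      _ < ⊤ := by
          apply ENNReal.add_lt_top.2
          constructor
          · exact ENNReal.mul_lt_top (by norm_num) (lt_of_le_of_lt hbound2
              (lt_top_iff_ne_top.2 hfin))
          · exact ENNReal.mul_lt_top ENNReal.ofReal_lt_top measure_Ioc_lt_top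
  -- Step 9: speed identity and upper speed property
  have hspeed : ∀ s s' : ℝ, 0 ≤ s → s ≤ s' → s' ≤ T →
      (∫ r in (tauFn g s)..(tauFn g s'), m' r) = ∫ u in s..s', mt u := by
    intro s s' hs hss hsT
    have hττ : tauFn g s ≤ tauFn g s' := tau_mono g hss
    have h1 : ENNReal.ofReal (∫ r in (tauFn g s)..(tauFn g s'), m' r) =
        ∫⁻ r in Set.Ioc (tauFn g s) (tauFn g s'), ENNReal.ofReal (m' r) :=
      ofReal_intervalIntegral_eq_lintegral hττ hm'int.integrableOn (fun r _ => hm'0 r)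
    have h2 : ENNReal.ofReal (∫ u in s..s', mt u) =
        ∫⁻ u in Set.Ioc s s', ENNReal.ofReal (mt u) :=
      ofReal_intervalIntegral_eq_lintegral hss (hmtIcc.mono_set (Set.Ioc_subset_Ioc hs hsT))
        (fun u _ => hmt0 u)
    have h3 : (∫⁻ r in Set.Ioc (tauFn g s) (tauFn g s'), ENNReal.ofReal (m' r)) =
        ∫⁻ u in Set.Ioc s s', ENNReal.ofReal (mt u) := by
      have ht := transfer s s' hs hss hsT (fun r => ENNReal.ofReal (G (γ r) + δ))
        ((hGγ.add aemeasurable_const).ennreal_ofReal)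
      calc (∫⁻ r in Set.Ioc (tauFn g s) (tauFn g s'), ENNReal.ofReal (m' r))
          = ∫⁻ r in Set.Ioc (tauFn g s) (tauFn g s'),
              ENNReal.ofReal (G (γ r) + δ) * ENNReal.ofReal (g r) := by
            apply setLIntegral_congr_fun measurableSet_Ioc
            intro r hr
            have hrIcc : r ∈ Set.Icc (0:ℝ) 1 :=
              ⟨(hτmem s).1.trans hr.1.le, hr.2.trans (hτmem s').2⟩
            beta_reduce
            rw [← ENNReal.ofReal_mul (hGpos r).le, hgmul r hrIcc]
        _ = ∫⁻ u in Set.Ioc s s', ENNReal.ofReal (G (γ (tauFn g u)) + δ) := ht.symm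
    have hnn1 : 0 ≤ ∫ r in (tauFn g s)..(tauFn g s'), m' r :=
      intervalIntegral.integral_nonneg hττ (fun r _ => hm'0 r)
    have hnn2 : 0 ≤ ∫ u in s..s', mt u :=
      intervalIntegral.integral_nonneg hss (fun u _ => hmt0 u)
    apply (ENNReal.ofReal_eq_ofReal_iff hnn1 hnn2).1
    rw [h1, h3, ← h2]
  have huspη : IsUpperSpeedOn η mt 0 T := by
    refine ⟨fun u _ => hmt0 u, hmtII, ?_⟩
    intro s t hs hst ht
    have hkey := husp'.2.2 (tauFn g s) (tauFn g t) (hτmem s).1 (tau_mono g hst) (hτmem t).2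
    rw [hspeed s t hs hst ht] at hkey
    exact hkey
  have hηcont : ContinuousOn η (Set.Icc 0 T) := huspη.continuousOn
  have hη0 : η 0 = x := by
    rw [hηdef]
    simp only
    rw [hτ0, hγx]
  -- Step 10: the cost estimate
  have hcost : (∫⁻ u in Set.Ioc (0:ℝ) T,
      ENNReal.ofReal ((1/2) * (mt u) ^ 2 + (1/2) * (G (η u)) ^ 2)) ≤
      (∫⁻ t in Set.Ioc (0:ℝ) 1, ENNReal.ofReal (m t * G (γ t))) +
        ENNReal.ofReal (δ * (∫ r in (0:ℝ)..1, m r) / 2) := by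
    have hpt : ∀ u, ENNReal.ofReal ((1/2) * (mt u) ^ 2 + (1/2) * (G (η u)) ^ 2) =
        ENNReal.ofReal (G (η u) * (G (η u) + δ)) + ENNReal.ofReal (δ ^ 2 / 2) := by
      intro u
      rw [← ENNReal.ofReal_add (mul_nonneg (hG0 _) (add_nonneg (hG0 _) hδ.le)) (by positivity)]
      congr 1
      simp only [hmtdef]
      ring
    calc (∫⁻ u in Set.Ioc (0:ℝ) T,
        ENNReal.ofReal ((1/2) * (mt u) ^ 2 + (1/2) * (G (η u)) ^ 2))
        = (∫⁻ u in Set.Ioc (0:ℝ) T, ENNReal.ofReal (G (η u) * (G (η u) + δ))) +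
            ENNReal.ofReal (δ ^ 2 / 2) * volume (Set.Ioc (0:ℝ) T) := by
          rw [← setLIntegral_const, ← lintegral_add_right' _ aemeasurable_const]
          exact lintegral_congr (fun u => hpt u)
      _ ≤ (∫⁻ t in Set.Ioc (0:ℝ) 1, ENNReal.ofReal (m t * G (γ t))) +
            ENNReal.ofReal (δ * (∫ r in (0:ℝ)..1, m r) / 2) := by
          apply add_le_add hbound2
          rw [Real.volume_Ioc, sub_zero, ← ENNReal.ofReal_mul (by positivity)]
          apply ENNReal.ofReal_le_ofReal
          rw [← hL'eq]
          have h1 : δ ^ 2 / 2 * T ≤ δ ^ 2 / 2 * (δ⁻¹ * L') :=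
            mul_le_mul_of_nonneg_left hTle (by positivity)
          have h2 : δ ^ 2 / 2 * (δ⁻¹ * L') = δ * L' / 2 := by
            field_simp
          linarith
  -- Step 11: conclusion
  refine ⟨T, hT0, le_trans (sInf_le ?_) hcost⟩
  exact ⟨η, mt, hηcont, hη0, hηT, huspη, hmtsqII, rfl⟩

/-- If `G : X → [0,∞)` is Borel and `G y = 0`, then `T ↦ E_G^T(x,y)` is
nonincreasing on `(0,∞)`, dominates `d_G(x,y)`, and converges to `d_G(x,y)` as `T → ∞`. -/
theorem actionCost_antitone_tendsto_finslerCost {X : Type*} [MetricSpace X]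
    [MeasurableSpace X] [BorelSpace X]
    (G : X → ℝ) (hG0 : ∀ x, 0 ≤ G x) (hGmeas : Measurable G)
    (x y : X) (hGy : G y = 0) :
    (∀ T₁ T₂ : ℝ, 0 < T₁ → T₁ ≤ T₂ → actionCost G T₂ x y ≤ actionCost G T₁ x y) ∧
    (∀ T : ℝ, 0 < T → finslerCost G x y ≤ actionCost G T x y) ∧
    Filter.Tendsto (fun T : ℝ => actionCost G T x y) Filter.atTop
      (nhds (finslerCost G x y)) := by
  refine ⟨fun T₁ T₂ h1 h2 => actionCost_antitone G x y hGy h1.le h2,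
    fun T hT => finslerCost_le_actionCost G hGmeas x y hT, ?_⟩
  rw [tendsto_order]
  constructor
  · intro b hb
    filter_upwards [eventually_ge_atTop (1:ℝ)] with T hT
    exact lt_of_lt_of_le hb (finslerCost_le_actionCost G hGmeas x y
      (lt_of_lt_of_le one_pos hT))
  · intro b hb
    obtain ⟨c, hc1, hc2⟩ := exists_between hb
    obtain ⟨e, hemem, helt⟩ := sInf_lt_iff.1 hc1
    obtain ⟨γ, m, hγc, hγx, hγy, husp, rfl⟩ := hemem
    set e := ∫⁻ t in Set.Ioc (0:ℝ) 1, ENNReal.ofReal (m t * G (γ t)) with hedef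
    have hefin : e ≠ ⊤ := by
      intro h
      rw [h] at helt
      exact absurd (lt_of_lt_of_le helt le_top).ne' (by simp)
    have hεex : ∃ ε : ℝ, 0 < ε ∧ e + ENNReal.ofReal ε ≤ c := by
      rcases eq_or_ne c ⊤ with rfl | hc
      · exact ⟨1, one_pos, le_top⟩
      · refine ⟨(c - e).toReal, ?_, ?_⟩
        · apply ENNReal.toReal_pos
          · rw [ne_eq, tsub_eq_zero_iff_le]
            exact not_le.2 helt
          · exact ENNReal.sub_ne_top hc
        · rw [ENNReal.ofReal_toReal (ENNReal.sub_ne_top hc)]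
          rw [add_tsub_cancel_of_le helt.le]
    obtain ⟨ε, hεpos, hεle⟩ := hεex
    set L := ∫ r in (0:ℝ)..1, m r with hLdef
    have hL0 : 0 ≤ L := intervalIntegral.integral_nonneg zero_le_one (fun u hu => husp.1 u hu)
    have hδpos : 0 < ε / (L + 1) := by positivity
    obtain ⟨T₀, hT₀0, hT₀le⟩ := actionCost_le_of_finslerPair G hG0 hGmeas x y γ m hγc hγx hγy
      husp hδpos hefin
    have hδL : ε / (L + 1) * L / 2 ≤ ε := by
      rw [div_mul_eq_mul_div, div_div]
      rw [div_le_iff₀ (by positivity)]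
      nlinarith
    have hT₀c : actionCost G T₀ x y ≤ c :=
      hT₀le.trans (le_trans (add_le_add_right (ENNReal.ofReal_le_ofReal hδL) _) hεle)
    filter_upwards [eventually_ge_atTop (max T₀ 1)] with T hT
    have hmono : actionCost G T x y ≤ actionCost G T₀ x y :=
      actionCost_antitone G x y hGy hT₀0 (le_trans (le_max_left _ _) hT)
    exact lt_of_le_of_lt (hmono.trans hT₀c) hc2
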